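/- A prime p is good if and only if p ∈ {2, 3, 7, 43}. -/

import Mathlib

/-- A prime `p` is good if `p - 1` is squarefree and every prime factor of
`p - 1` is good. -/
inductive Good : ℕ → Prop where
  | intro (p : ℕ) (hp : p.Prime) (hsq : Squarefree (p - 1))
      (hrec : ∀ q : ℕ, q.Prime → q ∣ p - 1 → Good q) : Good p

lemma sqf2 : Squarefree (2 - 1 : ℕ) := by norm_num
lemma sqf3 : Squarefree (3 - 1 : ℕ) := by
  norm_num
  exact Nat.prime_two.squarefree
lemma sqf7 : Squarefree (7 - 1 : ℕ) := by
  norm_num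
  rw [show (6:ℕ) = 2*3 by norm_num]
  exact Nat.squarefree_mul_iff.mpr
    ⟨by norm_num, Nat.prime_two.squarefree, Nat.prime_three.squarefree⟩
lemma sqf43 : Squarefree (43 - 1 : ℕ) := by
  norm_num
  rw [show (42:ℕ) = 2*3*7 by norm_num]
  exact Nat.squarefree_mul_iff.mpr
    ⟨by norm_num,
     Nat.squarefree_mul_iff.mpr
       ⟨by norm_num, Nat.prime_two.squarefree, Nat.prime_three.squarefree⟩,
     (by norm_num : Nat.Prime 7).squarefree⟩

lemma good2 : Good 2 :=
  Good.intro 2 (by norm_num) sqf2 (fun q hq hd => by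
    simp [Nat.dvd_one] at hd
    exact (hq.ne_one hd).elim)

lemma good3 : Good 3 :=
  Good.intro 3 (by norm_num) sqf3 (fun q hq hd => by
    have : q = 2 := (Nat.prime_dvd_prime_iff_eq hq (by norm_num)).mp hd
    subst this; exact good2)

lemma good7 : Good 7 :=
  Good.intro 7 (by norm_num) sqf7 (fun q hq hd => by
    have h6 : q ≤ 6 := Nat.le_of_dvd (by norm_num) hd
    have h2 := hq.two_le
    interval_cases q <;>
      first
        | exact good2
        | exact good3
        | (norm_num at hq <;> norm_num at hd))

lemma good43 : Good 43 :=
  Good.intro 43 (by norm_num) sqf43 (fun q hq hd => by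
    have h42 : q ≤ 42 := Nat.le_of_dvd (by norm_num) hd
    have h2 := hq.two_le
    interval_cases q <;>
      first
        | exact good2
        | exact good3
        | exact good7
        | (norm_num at hq <;> norm_num at hd))

set_option maxHeartbeats 1000000 in
set_option maxRecDepth 20000 in
lemma divisors_1806 :
    Nat.divisors 1806 = {1,2,3,6,7,14,21,42,43,86,129,258,301,602,903,1806} := by
  decide

/-- A prime `p` is good if and only if `p ∈ {2, 3, 7, 43}`. -/
theorem good_iff (p : ℕ) (hp : p.Prime) :
    Good p ↔ p = 2 ∨ p = 3 ∨ p = 7 ∨ p = 43 := by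
  constructor
  · intro hG
    clear hp
    induction hG with
    | intro p hp hsq hrec ih =>
      have hsub : (p - 1).primeFactors ⊆ ({2, 3, 7, 43} : Finset ℕ) := by
        intro q hq
        have hq1 := Nat.prime_of_mem_primeFactors hq
        have hq2 := Nat.dvd_of_mem_primeFactors hq
        simpa using ih q hq1 hq2
      have hdvd : p - 1 ∣ 1806 := by
        have h1 : ∏ q ∈ (p - 1).primeFactors, q = p - 1 :=
          Nat.prod_primeFactors_of_squarefree hsq
        have h2 : ∏ q ∈ (p - 1).primeFactors, q ∣ ∏ q ∈ ({2, 3, 7, 43} : Finset ℕ), q :=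
          Finset.prod_dvd_prod_of_subset _ _ _ hsub
        rw [h1] at h2
        simpa using h2
      have hmem : p - 1 ∈ Nat.divisors 1806 := Nat.mem_divisors.mpr ⟨hdvd, by norm_num⟩
      rw [divisors_1806] at hmem
      simp only [Finset.mem_insert, Finset.mem_singleton] at hmem
      have h2 := hp.two_le
      rcases hmem with h|h|h|h|h|h|h|h|h|h|h|h|h|h|h|h <;>
        [skip; skip; skip; skip; skip; skip; skip; skip;
         skip; skip; skip; skip; skip; skip; skip; skip] <;>
        (try omega) <;>
        (exfalso;
         have hpv : p = (p - 1) + 1 := by omega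
         rw [hpv, h] at hp
         norm_num at hp)
  · rintro (rfl | rfl | rfl | rfl)
    exacts [good2, good3, good7, good43]
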